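/- Let f : ℝⁿ → ℝ be locally integrable with Mf ≢ ∞. If x is not in the singular set of f (i.e., limsup_{h→0} |f(x+h)−f(x)|/|h| < ∞), then x is not in the singular set of Mf (i.e., limsup_{h→0} |Mf(x+h)−Mf(x)|/|h| < ∞). -/

import Mathlib

open Filter Topology MeasureTheory Metric ENNReal

/-- Average of `|f|` over the ball `B(x, r)`. -/
noncomputable def avgAbs (n : ℕ) (f : EuclideanSpace ℝ (Fin n) → ℝ)
    (x : EuclideanSpace ℝ (Fin n)) (r : ℝ) : ℝ :=
  ⨍ y in ball x r, |f y| ∂volume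

/-- The centered Hardy–Littlewood maximal function, with values in `ℝ≥0∞`. -/
noncomputable def maxFn (n : ℕ) (f : EuclideanSpace ℝ (Fin n) → ℝ)
    (x : EuclideanSpace ℝ (Fin n)) : ℝ≥0∞ :=
  ⨆ (r : ℝ) (_ : 0 < r), ENNReal.ofReal (avgAbs n f x r)

private lemma one_add_pow_le' (n : ℕ) {t : ℝ} (h0 : 0 ≤ t) (h1 : t ≤ 1) :
    (1 + t) ^ n ≤ 1 + 2 ^ n * t := by
  have key : ∀ m : ℕ, (1 + t) ^ m ≤ 1 + (2 ^ m - 1) * t := by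
    intro m
    induction m with
    | zero => simp
    | succ m ih =>
      have h2 : (1:ℝ) ≤ 2 ^ m := one_le_pow₀ (by norm_num)
      have h3 : (0:ℝ) ≤ (1+t)^m := by positivity
      calc (1+t)^(m+1) = (1+t)^m * (1+t) := pow_succ _ _
      _ ≤ (1 + (2^m - 1) * t) * (1+t) := by nlinarith
      _ ≤ 1 + (2^(m+1) - 1) * t := by
        have h4 : t*t ≤ t := mul_le_of_le_one_left h0 h1
        rw [pow_succ]; nlinarith
  have h2 : (1:ℝ) ≤ 2 ^ n := one_le_pow₀ (by norm_num)
  calc (1+t)^n ≤ 1 + (2^n - 1) * t := key n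
  _ ≤ 1 + 2^n * t := by nlinarith

private lemma vol_ball' {n : ℕ} (hn : 0 < n) (x : EuclideanSpace ℝ (Fin n)) {r : ℝ} (hr : 0 ≤ r) :
    volume (ball x r)
      = ENNReal.ofReal (r ^ n) * volume (ball (0 : EuclideanSpace ℝ (Fin n)) 1) := by
  haveI : Nonempty (Fin n) := ⟨⟨0, hn⟩⟩
  rw [Measure.addHaar_ball volume x hr, finrank_euclideanSpace_fin]

private lemma intOn' {n : ℕ} {f : EuclideanSpace ℝ (Fin n) → ℝ}
    (hf : LocallyIntegrable f volume) (c : EuclideanSpace ℝ (Fin n)) (t : ℝ) :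
    IntegrableOn (fun y => |f y|) (ball c t) volume := by
  have h1 : IntegrableOn f (closedBall c t) volume :=
    hf.integrableOn_isCompact (isCompact_closedBall c t)
  have h2 : IntegrableOn (fun y => |f y|) (closedBall c t) volume := by
    have := h1.norm
    simp only [Real.norm_eq_abs] at this
    exact this
  exact h2.mono_set ball_subset_closedBall

private lemma avg_nonneg'' {n : ℕ} (f : EuclideanSpace ℝ (Fin n) → ℝ)
    (x : EuclideanSpace ℝ (Fin n)) (r : ℝ) : 0 ≤ avgAbs n f x r := by
  rw [avgAbs, setAverage_eq, smul_eq_mul]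
  exact mul_nonneg (inv_nonneg.2 ENNReal.toReal_nonneg)
    (setIntegral_nonneg measurableSet_ball fun y _ => abs_nonneg _)

private lemma mul_avg' {n : ℕ} (f : EuclideanSpace ℝ (Fin n) → ℝ)
    (x : EuclideanSpace ℝ (Fin n)) {r : ℝ} (hr : 0 < r) :
    (volume (ball x r)).toReal * avgAbs n f x r = ∫ y in ball x r, |f y| ∂volume := by
  rw [avgAbs, setAverage_eq, smul_eq_mul, measureReal_def, ← mul_assoc, mul_inv_cancel₀, one_mul]
  exact ENNReal.toReal_ne_zero.2 ⟨(measure_ball_pos volume x hr).ne', measure_ball_lt_top.ne⟩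

section
variable {n : ℕ} {f : EuclideanSpace ℝ (Fin n) → ℝ}

private lemma volR_pos' (x : EuclideanSpace ℝ (Fin n)) {r : ℝ} (hr : 0 < r) :
    0 < (volume (ball x r)).toReal :=
  ENNReal.toReal_pos (measure_ball_pos volume x hr).ne' measure_ball_lt_top.ne

private lemma avg_le_bound' (hf : LocallyIntegrable f volume)
    (x : EuclideanSpace ℝ (Fin n)) {r K : ℝ} (hr : 0 < r)
    (hb : ∀ w ∈ ball x r, |f w| ≤ K) : avgAbs n f x r ≤ K := by
  have hV : 0 < (volume (ball x r)).toReal := volR_pos' x hr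
  have h1 : ∫ y in ball x r, |f y| ∂volume ≤ ∫ _ in ball x r, K ∂volume :=
    setIntegral_mono_on (intOn' hf x r)
      (integrableOn_const measure_ball_lt_top.ne) measurableSet_ball hb
  rw [setIntegral_const, smul_eq_mul, measureReal_def] at h1
  rw [← mul_avg' f x hr] at h1
  exact le_of_mul_le_mul_left (by linarith) hV

private lemma avg_ge_bound' (hf : LocallyIntegrable f volume)
    (x : EuclideanSpace ℝ (Fin n)) {r K : ℝ} (hr : 0 < r)
    (hb : ∀ w ∈ ball x r, K ≤ |f w|) : K ≤ avgAbs n f x r := by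
  have hV : 0 < (volume (ball x r)).toReal := volR_pos' x hr
  have h1 : ∫ _ in ball x r, K ∂volume ≤ ∫ y in ball x r, |f y| ∂volume :=
    setIntegral_mono_on (integrableOn_const measure_ball_lt_top.ne)
      (intOn' hf x r) measurableSet_ball hb
  rw [setIntegral_const, smul_eq_mul, measureReal_def] at h1
  rw [← mul_avg' f x hr] at h1
  exact le_of_mul_le_mul_left (by linarith) hV

private lemma avg_scale' (hn : 0 < n) (hf : LocallyIntegrable f volume)
    {c d : EuclideanSpace ℝ (Fin n)} {r t : ℝ} (hr : 0 < r)
    (hsub : ball c r ⊆ ball d t) :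
    r ^ n * avgAbs n f c r ≤ t ^ n * avgAbs n f d t := by
  have ht : 0 < t := nonempty_ball.1 ((nonempty_ball.2 hr).mono hsub)
  have hVB : 0 < (volume (ball (0 : EuclideanSpace ℝ (Fin n)) 1)).toReal := volR_pos' _ one_pos
  have h1 : (volume (ball c r)).toReal * avgAbs n f c r
      ≤ (volume (ball d t)).toReal * avgAbs n f d t := by
    rw [mul_avg' f c hr, mul_avg' f d ht]
    exact setIntegral_mono_set (intOn' hf d t)
      (Filter.Eventually.of_forall fun y => abs_nonneg _) (HasSubset.Subset.eventuallyLE hsub)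
  rw [vol_ball' hn c hr.le, vol_ball' hn d ht.le, ENNReal.toReal_mul, ENNReal.toReal_mul,
    ENNReal.toReal_ofReal (by positivity), ENNReal.toReal_ofReal (by positivity)] at h1
  have h2 : (r ^ n * avgAbs n f c r) * (volume (ball (0 : EuclideanSpace ℝ (Fin n)) 1)).toReal
      ≤ (t ^ n * avgAbs n f d t) * (volume (ball (0 : EuclideanSpace ℝ (Fin n)) 1)).toReal := by
    ring_nf; ring_nf at h1; linarith
  exact le_of_mul_le_mul_right h2 hVB

private lemma le_maxFn' (x : EuclideanSpace ℝ (Fin n)) {r : ℝ} (hr : 0 < r) :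
    ENNReal.ofReal (avgAbs n f x r) ≤ maxFn n f x :=
  le_iSup₂ (f := fun r (_ : 0 < r) => ENNReal.ofReal (avgAbs n f x r)) r hr

private lemma maxFn_le' {x : EuclideanSpace ℝ (Fin n)} {K : ℝ}
    (hK : ∀ r, 0 < r → avgAbs n f x r ≤ K) : maxFn n f x ≤ ENNReal.ofReal K :=
  iSup₂_le fun r hr => ENNReal.ofReal_le_ofReal (hK r hr)

private lemma avg_le_toReal' {x : EuclideanSpace ℝ (Fin n)} (hx : maxFn n f x ≠ ⊤) {r : ℝ}
    (hr : 0 < r) : avgAbs n f x r ≤ (maxFn n f x).toReal := by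
  have := ENNReal.toReal_mono hx (le_maxFn' x hr)
  rwa [ENNReal.toReal_ofReal (avg_nonneg'' f x r)] at this

end

private lemma avg_translate' {n : ℕ} {f : EuclideanSpace ℝ (Fin n) → ℝ} (hn : 0 < n)
    (hf : LocallyIntegrable f volume) {a b : EuclideanSpace ℝ (Fin n)} {r s c₀ L : ℝ}
    (hr : 0 < r) (hs : 0 ≤ s) (hab : dist a b ≤ s) (hsr : s ≤ r)
    (hg : ∀ w ∈ ball a (r + s), abs (|f w| - c₀) ≤ L) :
    |avgAbs n f a r - avgAbs n f b r| ≤ 2 ^ (n+1) * L * (s / r) := by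
  set g : EuclideanSpace ℝ (Fin n) → ℝ := fun w => |f w| - c₀ with hgdef
  set B := ball a (r + s) with hBdef
  have hrs : 0 < r + s := by linarith
  have hL : 0 ≤ L := le_trans (abs_nonneg _) (hg a (mem_ball_self hrs))
  have hBa : ball a r ⊆ B := ball_subset_ball (by linarith)
  have hBb : ball b r ⊆ B := fun w hw => by
    rw [mem_ball] at hw ⊢
    calc dist w a ≤ dist w b + dist b a := dist_triangle _ _ _
    _ < r + s := by rw [dist_comm b a]; linarith
  have hgint : IntegrableOn g B volume :=
    (intOn' hf a (r+s)).sub (integrableOn_const measure_ball_lt_top.ne)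
  -- integral of |f| over ball c r in terms of g
  have key : ∀ c : EuclideanSpace ℝ (Fin n), ball c r ⊆ B →
      (∫ y in ball c r, |f y| ∂volume)
        = (∫ y in B, g y ∂volume) - (∫ y in B \ ball c r, g y ∂volume)
          + c₀ * (volume (ball c r)).toReal := by
    intro c hsubc
    have h1 : ∫ y in B \ ball c r, g y ∂volume
        = (∫ y in B, g y ∂volume) - ∫ y in ball c r, g y ∂volume :=
      integral_diff measurableSet_ball hgint hsubc
    have h2 : ∫ y in ball c r, g y ∂volume
        = (∫ y in ball c r, |f y| ∂volume) - c₀ * (volume (ball c r)).toReal := by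
      rw [hgdef]
      rw [integral_sub (intOn' hf c r) (integrableOn_const measure_ball_lt_top.ne)]
      rw [setIntegral_const, smul_eq_mul, measureReal_def, mul_comm]
    rw [h2] at h1
    linarith
  -- volumes
  have hveq : volume (ball b r) = volume (ball a r) := by
    rw [vol_ball' hn a hr.le, vol_ball' hn b hr.le]
  -- bound on the pieces
  have hdiffvol : ∀ c : EuclideanSpace ℝ (Fin n), ball c r ⊆ B →
      (volume (B \ ball c r)).toReal
        = ((r+s)^n - r^n) * (volume (ball (0 : EuclideanSpace ℝ (Fin n)) 1)).toReal := by
    intro c hsubc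
    rw [measure_diff hsubc measurableSet_ball.nullMeasurableSet measure_ball_lt_top.ne]
    rw [ENNReal.toReal_sub_of_le (measure_mono hsubc) measure_ball_lt_top.ne]
    rw [vol_ball' hn c hr.le, vol_ball' hn a hrs.le, ENNReal.toReal_mul, ENNReal.toReal_mul,
      ENNReal.toReal_ofReal (by positivity), ENNReal.toReal_ofReal (by positivity)]
    ring
  have hpiece : ∀ c : EuclideanSpace ℝ (Fin n), ball c r ⊆ B →
      |∫ y in B \ ball c r, g y ∂volume|
        ≤ L * (((r+s)^n - r^n) * (volume (ball (0 : EuclideanSpace ℝ (Fin n)) 1)).toReal) := by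
    intro c hsubc
    have hmeas : volume (B \ ball c r) < ⊤ :=
      lt_of_le_of_lt (measure_mono Set.diff_subset) measure_ball_lt_top
    have := norm_setIntegral_le_of_norm_le_const_ae' (f := g) (μ := volume) hmeas
      (Filter.Eventually.of_forall fun w hw => by
        rw [Real.norm_eq_abs]; exact hg w (Set.diff_subset hw))
    rw [Real.norm_eq_abs] at this
    rw [← hdiffvol c hsubc]
    exact this
  -- key difference identity
  have hVa : 0 < (volume (ball a r)).toReal := volR_pos' a hr
  have hdiff : (volume (ball a r)).toReal * (avgAbs n f a r - avgAbs n f b r)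
      = (∫ y in B \ ball b r, g y ∂volume) - (∫ y in B \ ball a r, g y ∂volume) := by
    rw [mul_sub, mul_avg' f a hr, hveq.symm, mul_avg' f b hr, key a hBa, key b hBb, hveq]
    ring
  -- pow estimate
  have hpow : (r+s)^n - r^n ≤ 2^n * (s/r) * r^n := by
    have h0 : 0 ≤ s/r := by positivity
    have h1 : s/r ≤ 1 := by rw [div_le_one hr]; exact hsr
    have h2 : r + s = r * (1 + s/r) := by field_simp
    have h3 : (r+s)^n ≤ r^n * (1 + 2^n * (s/r)) := by
      rw [h2, mul_pow]
      have := one_add_pow_le' n h0 h1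
      have hrn : (0:ℝ) ≤ r^n := by positivity
      nlinarith
    nlinarith [pow_nonneg hr.le n]
  -- combine
  have hVB : 0 < (volume (ball (0 : EuclideanSpace ℝ (Fin n)) 1)).toReal := volR_pos' _ one_pos
  have hVaeq : (volume (ball a r)).toReal = r^n * (volume (ball (0 : EuclideanSpace ℝ (Fin n)) 1)).toReal := by
    rw [vol_ball' hn a hr.le, ENNReal.toReal_mul, ENNReal.toReal_ofReal (by positivity)]
  have habs : |(volume (ball a r)).toReal * (avgAbs n f a r - avgAbs n f b r)|
      ≤ 2 * (L * (((r+s)^n - r^n) * (volume (ball (0 : EuclideanSpace ℝ (Fin n)) 1)).toReal)) := by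
    rw [hdiff]
    calc |(∫ y in B \ ball b r, g y ∂volume) - (∫ y in B \ ball a r, g y ∂volume)|
        ≤ |∫ y in B \ ball b r, g y ∂volume| + |∫ y in B \ ball a r, g y ∂volume| :=
          abs_sub _ _
    _ ≤ _ := by
        have := hpiece a hBa
        have := hpiece b hBb
        linarith
  rw [abs_mul, abs_of_pos hVa] at habs
  have hfinal : (volume (ball a r)).toReal * |avgAbs n f a r - avgAbs n f b r|
      ≤ (2^(n+1) * L * (s/r)) * (volume (ball a r)).toReal := by
    calc (volume (ball a r)).toReal * |avgAbs n f a r - avgAbs n f b r|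
        ≤ 2 * (L * (((r+s)^n - r^n) * (volume (ball (0 : EuclideanSpace ℝ (Fin n)) 1)).toReal)) := habs
    _ ≤ 2 * (L * ((2^n * (s/r) * r^n) * (volume (ball (0 : EuclideanSpace ℝ (Fin n)) 1)).toReal)) := by
        have : L * (((r+s)^n - r^n) * (volume (ball (0 : EuclideanSpace ℝ (Fin n)) 1)).toReal)
            ≤ L * ((2^n * (s/r) * r^n) * (volume (ball (0 : EuclideanSpace ℝ (Fin n)) 1)).toReal) := by
          apply mul_le_mul_of_nonneg_left _ hL
          apply mul_le_mul_of_nonneg_right hpow hVB.le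
        linarith
    _ = (2^(n+1) * L * (s/r)) * (r^n * (volume (ball (0 : EuclideanSpace ℝ (Fin n)) 1)).toReal) := by ring
    _ = (2^(n+1) * L * (s/r)) * (volume (ball a r)).toReal := by rw [hVaeq]
  have h9 : |avgAbs n f a r - avgAbs n f b r| * (volume (ball a r)).toReal
      ≤ (2^(n+1) * L * (s/r)) * (volume (ball a r)).toReal := by
    rw [mul_comm]; exact hfinal
  exact le_of_mul_le_mul_right h9 hVa

private lemma core' {n : ℕ} {f : EuclideanSpace ℝ (Fin n) → ℝ} (hn : 0 < n)
    (hf : LocallyIntegrable f volume) {x a b : EuclideanSpace ℝ (Fin n)}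
    {C ρ s Mb : ℝ} (hC : 0 ≤ C) (hρ : 0 < ρ) (hs : 0 ≤ s) (hsρ : s ≤ ρ)
    (hax : dist a x ≤ s) (hbx : dist b x ≤ s) (hab : dist a b ≤ s)
    (hlip : ∀ w, dist w x ≤ 3 * ρ → |f w - f x| ≤ C * dist w x)
    (hMb : ∀ r, 0 < r → avgAbs n f b r ≤ Mb)
    (hMb2 : |f x| - C * s ≤ Mb)
    {r : ℝ} (hr : 0 < r) :
    avgAbs n f a r ≤ Mb + (3*C + 3*2^(n+1)*C + 2^n * Mb / ρ) * s := by
  have hMb0 : 0 ≤ Mb := le_trans (avg_nonneg'' f b 1) (hMb 1 one_pos)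
  have hcoef : 0 ≤ 2^n * Mb / ρ := by positivity
  have h2n : (0:ℝ) ≤ 2^(n+1) := by positivity
  rcases le_total r s with hcase1 | hcase2
  · -- r ≤ s : pointwise bound
    have hb : ∀ w ∈ ball a r, |f w| ≤ |f x| + C * (2*s) := by
      intro w hw
      rw [mem_ball] at hw
      have hwx : dist w x ≤ 2*s := by
        calc dist w x ≤ dist w a + dist a x := dist_triangle _ _ _
        _ ≤ 2*s := by linarith
      have := hlip w (by linarith)
      have habs : |f w| - |f x| ≤ |f w - f x| := abs_sub_abs_le_abs_sub _ _
      have : |f w - f x| ≤ C * (2*s) := le_trans this (by nlinarith)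
      linarith
    have havg := avg_le_bound' hf a hr hb
    have e1 : avgAbs n f a r ≤ Mb + 3*C*s := by linarith
    nlinarith [mul_nonneg (mul_nonneg (show (0:ℝ) ≤ 3*2^(n+1) by positivity) hC) hs,
      mul_nonneg hcoef hs]
  · rcases le_total r ρ with hcase2a | hcase2b
    · -- s ≤ r ≤ ρ : translation estimate
      have hg : ∀ w ∈ ball a (r + s), |(|f w| - |f x|)| ≤ C * (3*r) := by
        intro w hw
        rw [mem_ball] at hw
        have hwx : dist w x ≤ r + 2*s := by
          calc dist w x ≤ dist w a + dist a x := dist_triangle _ _ _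
          _ ≤ r + 2*s := by linarith
        have h1 := hlip w (by linarith)
        have h2 : |(|f w| - |f x|)| ≤ |f w - f x| := abs_abs_sub_abs_le_abs_sub _ _
        have h3 : C * dist w x ≤ C * (3*r) := by nlinarith
        linarith
      have htr := avg_translate' hn hf hr hs hab hcase2 hg
      have hsr' : s / r ≤ s / r := le_refl _
      have h4 : 2^(n+1) * (C * (3*r)) * (s/r) = 3 * 2^(n+1) * C * s := by
        field_simp
      rw [h4] at htr
      have h5 : avgAbs n f a r ≤ avgAbs n f b r + 3 * 2^(n+1) * C * s := by
        have := abs_sub_le_iff.1 htr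
        linarith [this.1]
      have := hMb r hr
      nlinarith
    · -- ρ ≤ r : scaling estimate
      have hsub : ball a r ⊆ ball b (r + s) := fun w hw => by
        rw [mem_ball] at hw ⊢
        calc dist w b ≤ dist w a + dist a b := dist_triangle _ _ _
        _ < r + s := by linarith
      have hsc := avg_scale' hn hf hr hsub
      have hsr1 : s / r ≤ 1 := by
        rw [div_le_one hr]; linarith
      have hsr0 : 0 ≤ s / r := by positivity
      have hpow : (r+s)^n ≤ r^n * (1 + 2^n * (s/r)) := by
        have h2 : r + s = r * (1 + s/r) := by field_simp
        rw [h2, mul_pow]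
        have := one_add_pow_le' n hsr0 hsr1
        have hrn : (0:ℝ) ≤ r^n := by positivity
        nlinarith
      have hAb : avgAbs n f b (r+s) ≤ Mb := hMb (r+s) (by linarith)
      have hAb0 : 0 ≤ avgAbs n f b (r+s) := avg_nonneg'' f b (r+s)
      have hrn : (0:ℝ) < r^n := by positivity
      have h6 : r^n * avgAbs n f a r ≤ r^n * (1 + 2^n * (s/r)) * Mb := by
        calc r^n * avgAbs n f a r ≤ (r+s)^n * avgAbs n f b (r+s) := hsc
        _ ≤ (r^n * (1 + 2^n * (s/r))) * avgAbs n f b (r+s) := by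
            apply mul_le_mul_of_nonneg_right hpow hAb0
        _ ≤ r^n * (1 + 2^n * (s/r)) * Mb := by
            apply mul_le_mul_of_nonneg_left hAb
            positivity
      have h7 : avgAbs n f a r ≤ (1 + 2^n * (s/r)) * Mb := by
        have := le_of_mul_le_mul_left (by calc r^n * avgAbs n f a r ≤ _ := h6
          _ = r^n * ((1 + 2^n * (s/r)) * Mb) := by ring) hrn
        exact this
      have h8 : 2^n * (s/r) * Mb ≤ 2^n * Mb / ρ * s := by
        have hsr2 : s / r ≤ s / ρ := by gcongr
        calc 2^n * (s/r) * Mb ≤ 2^n * (s/ρ) * Mb := by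
              apply mul_le_mul_of_nonneg_right _ hMb0
              apply mul_le_mul_of_nonneg_left hsr2 (by positivity)
        _ = 2^n * Mb / ρ * s := by field_simp
      nlinarith [mul_nonneg hC hs, mul_nonneg (mul_nonneg h2n hC) hs]

set_option maxHeartbeats 1000000 in
/-- Theorem 3.5: if `Mf ≢ ∞` and `x` is not in the singular set of `f`
(the difference quotients of `f` at `x` are bounded near `x`), then `x` is not in the
singular set of `Mf`. -/
theorem singular_set_of_maximal_function
    (n : ℕ) (f : EuclideanSpace ℝ (Fin n) → ℝ) (hf : LocallyIntegrable f volume)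
    (hne : ∃ z, maxFn n f z ≠ ⊤) (x : EuclideanSpace ℝ (Fin n))
    (hx : ∃ C r₀ : ℝ, 0 < r₀ ∧ ∀ h : EuclideanSpace ℝ (Fin n), ‖h‖ ≤ r₀ →
      |f (x + h) - f x| ≤ C * ‖h‖) :
    ∃ C' r' : ℝ, 0 < r' ∧ ∀ h : EuclideanSpace ℝ (Fin n), ‖h‖ ≤ r' →
      |(maxFn n f (x + h)).toReal - (maxFn n f x).toReal| ≤ C' * ‖h‖ := by
  rcases Nat.eq_zero_or_pos n with hn0 | hn
  · -- trivial case n = 0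
    subst hn0
    haveI : Subsingleton (EuclideanSpace ℝ (Fin 0)) :=
      ⟨fun a b => PiLp.ext fun i => i.elim0⟩
    refine ⟨1, 1, one_pos, fun h _ => ?_⟩
    have h0 : h = 0 := Subsingleton.elim h 0
    subst h0
    simp
  obtain ⟨C₀, r₀, hr₀, hC₀⟩ := hx
  obtain ⟨z, hz⟩ := hne
  set C := max C₀ 0 with hCdef
  have hC : 0 ≤ C := le_max_right _ _
  set ρ := r₀ / 3 with hρdef
  have hρ : 0 < ρ := by positivity
  have h3ρ : 3 * ρ = r₀ := by rw [hρdef]; ring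
  have hlip : ∀ w, dist w x ≤ 3 * ρ → |f w - f x| ≤ C * dist w x := by
    intro w hw
    rw [h3ρ] at hw
    rw [dist_eq_norm] at hw ⊢
    have h1 := hC₀ (w - x) hw
    rw [add_sub_cancel] at h1
    calc |f w - f x| ≤ C₀ * ‖w - x‖ := h1
    _ ≤ C * ‖w - x‖ := mul_le_mul_of_nonneg_right (le_max_left _ _) (norm_nonneg _)
  -- bound on |f| near x
  have hfb : ∀ w, dist w x ≤ 3 * ρ → |f w| ≤ |f x| + C * dist w x := by
    intro w hw
    have h1 := hlip w hw
    have h2 : |f w| - |f x| ≤ |f w - f x| := abs_sub_abs_le_abs_sub _ _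
    linarith
  -- uniform bound K on maximal function near x
  have hMz : ∀ r, 0 < r → avgAbs n f z r ≤ (maxFn n f z).toReal :=
    fun r hr => avg_le_toReal' hz hr
  have hMz0 : 0 ≤ (maxFn n f z).toReal := ENNReal.toReal_nonneg
  set D := dist x z + ρ with hDdef
  have hD : 0 ≤ D := by positivity
  set K : ℝ := max (|f x| + C * (3*ρ)) ((1 + D/ρ)^n * (maxFn n f z).toReal) with hKdef
  have hK0 : 0 ≤ K := le_trans (by positivity) (le_max_left _ _)
  have hKb : ∀ y, dist y x ≤ ρ → ∀ r, 0 < r → avgAbs n f y r ≤ K := by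
    intro y hy r hr
    rcases le_total r ρ with hrρ | hrρ
    · refine le_trans (avg_le_bound' hf y hr fun w hw => ?_) (le_max_left _ _)
      rw [mem_ball] at hw
      have hwx : dist w x ≤ 3*ρ := by
        calc dist w x ≤ dist w y + dist y x := dist_triangle _ _ _
        _ ≤ 3*ρ := by linarith
      have := hfb w hwx
      nlinarith
    · refine le_trans ?_ (le_max_right _ _)
      have hsub : ball y r ⊆ ball z (r + D) := fun w hw => by
        rw [mem_ball] at hw ⊢
        calc dist w z ≤ dist w y + dist y x + dist x z := dist_triangle4 _ _ _ _
        _ < r + D := by rw [hDdef]; linarith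
      have hsc := avg_scale' hn hf hr hsub
      have hrD : 0 < r + D := by linarith
      have hpow : (r + D)^n ≤ r^n * (1 + D/ρ)^n := by
        rw [← mul_pow]
        apply pow_le_pow_left₀ hrD.le
        rw [mul_add, mul_one]
        have hDr : D ≤ r * (D / ρ) := by
          rw [mul_div_assoc', le_div_iff₀ hρ]
          nlinarith
        linarith
      have hAz := hMz (r + D) hrD
      have hAz0 := avg_nonneg'' f z (r + D)
      have hrn : (0:ℝ) < r^n := by positivity
      have h6 : r^n * avgAbs n f y r ≤ r^n * ((1 + D/ρ)^n * (maxFn n f z).toReal) := by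
        calc r^n * avgAbs n f y r ≤ (r+D)^n * avgAbs n f z (r+D) := hsc
        _ ≤ (r^n * (1 + D/ρ)^n) * avgAbs n f z (r+D) :=
            mul_le_mul_of_nonneg_right hpow hAz0
        _ ≤ r^n * ((1 + D/ρ)^n * (maxFn n f z).toReal) := by
            rw [mul_assoc]
            refine mul_le_mul_of_nonneg_left ?_ hrn.le
            exact mul_le_mul_of_nonneg_left hAz (by positivity)
      exact le_of_mul_le_mul_left h6 hrn
  have hKne : ∀ y, dist y x ≤ ρ → maxFn n f y ≠ ⊤ := by
    intro y hy
    have := maxFn_le' (hKb y hy)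
    exact ne_top_of_le_ne_top ofReal_ne_top this
  have hKtoReal : ∀ y, dist y x ≤ ρ → (maxFn n f y).toReal ≤ K := by
    intro y hy
    have h1 := maxFn_le' (hKb y hy)
    exact ENNReal.toReal_le_of_le_ofReal hK0 h1
  -- lower bound on maximal function near x
  have hlow : ∀ y s, 0 ≤ s → s ≤ ρ → dist y x ≤ s → |f x| - C * s ≤ (maxFn n f y).toReal := by
    intro y s hs hsρ hy
    refine le_of_forall_pos_le_add fun ε hε => ?_
    set t := min ρ (ε / (C + 1)) with htdef
    have ht : 0 < t := lt_min hρ (by positivity)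
    have htρ : t ≤ ρ := min_le_left _ _
    have hbd : ∀ w ∈ ball y t, |f x| - C * s - C * t ≤ |f w| := by
      intro w hw
      rw [mem_ball] at hw
      have hwx : dist w x ≤ t + s := by
        calc dist w x ≤ dist w y + dist y x := dist_triangle _ _ _
        _ ≤ t + s := by linarith
      have h1 := hlip w (by linarith)
      have h2 : |f x| - |f w| ≤ |f w - f x| := by
        rw [abs_sub_comm]
        exact abs_sub_abs_le_abs_sub _ _
      have h3 : C * dist w x ≤ C * (t + s) := mul_le_mul_of_nonneg_left hwx hC
      nlinarith
    have h4 := avg_ge_bound' hf y ht hbd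
    have h5 := avg_le_toReal' (hKne y (le_trans hy hsρ)) ht
    have h6 : C * t ≤ ε := by
      have ht2 : t ≤ ε / (C + 1) := min_le_right _ _
      have : C * t ≤ C * (ε / (C + 1)) := mul_le_mul_of_nonneg_left ht2 hC
      have h7 : C * (ε / (C + 1)) ≤ ε := by
        rw [mul_div_assoc']
        rw [div_le_iff₀ (by linarith)]
        nlinarith
      linarith
    linarith
  -- main conclusion
  refine ⟨3*C + 3*2^(n+1)*C + 2^n * K / ρ, ρ, hρ, fun h hh => ?_⟩
  set s := ‖h‖ with hsdef
  have hs : 0 ≤ s := norm_nonneg _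
  have hdxh : dist (x + h) x = s := by
    rw [dist_eq_norm]; simp [hsdef]
  have hdxx : dist x x = 0 := dist_self x
  have hnexh : maxFn n f (x+h) ≠ ⊤ := hKne (x+h) (by rw [hdxh]; exact hh)
  have hnex : maxFn n f x ≠ ⊤ := hKne x (by rw [hdxx]; exact hρ.le)
  set Mx := (maxFn n f x).toReal with hMxdef
  set Mxh := (maxFn n f (x+h)).toReal with hMxhdef
  have hMx : ∀ r, 0 < r → avgAbs n f x r ≤ Mx := fun r hr => avg_le_toReal' hnex hr
  have hMxh : ∀ r, 0 < r → avgAbs n f (x+h) r ≤ Mxh := fun r hr => avg_le_toReal' hnexh hr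
  have hMx2 : |f x| - C * s ≤ Mx := hlow x s hs hh (by rw [hdxx]; exact hs)
  have hMxh2 : |f x| - C * s ≤ Mxh := hlow (x+h) s hs hh (by rw [hdxh])
  have hMxK : Mx ≤ K := hKtoReal x (by rw [hdxx]; exact hρ.le)
  have hMxhK : Mxh ≤ K := hKtoReal (x+h) (by rw [hdxh]; exact hh)
  have hMx0 : 0 ≤ Mx := ENNReal.toReal_nonneg
  have hMxh0 : 0 ≤ Mxh := ENNReal.toReal_nonneg
  -- direction 1 : Mxh ≤ Mx + C' s
  have dir1 : Mxh ≤ Mx + (3*C + 3*2^(n+1)*C + 2^n * Mx / ρ) * s := by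
    have hcore : ∀ r, 0 < r → avgAbs n f (x+h) r
        ≤ Mx + (3*C + 3*2^(n+1)*C + 2^n * Mx / ρ) * s := by
      intro r hr
      exact core' hn hf hC hρ hs hh (by rw [hdxh]) (by rw [hdxx]; exact hs)
        (by rw [hdxh]) hlip hMx hMx2 hr
    have h1 := maxFn_le' hcore
    refine ENNReal.toReal_le_of_le_ofReal ?_ h1
    have : 0 ≤ (3*C + 3*2^(n+1)*C + 2^n * Mx / ρ) * s := by positivity
    linarith
  -- direction 2 : Mx ≤ Mxh + C' s
  have dir2 : Mx ≤ Mxh + (3*C + 3*2^(n+1)*C + 2^n * Mxh / ρ) * s := by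
    have hcore : ∀ r, 0 < r → avgAbs n f x r
        ≤ Mxh + (3*C + 3*2^(n+1)*C + 2^n * Mxh / ρ) * s := by
      intro r hr
      exact core' hn hf hC hρ hs hh (by rw [hdxx]; exact hs) (by rw [hdxh])
        (by rw [dist_comm, hdxh]) hlip hMxh hMxh2 hr
    have h1 := maxFn_le' hcore
    refine ENNReal.toReal_le_of_le_ofReal ?_ h1
    have : 0 ≤ (3*C + 3*2^(n+1)*C + 2^n * Mxh / ρ) * s := by positivity
    linarith
  -- combine
  have hcoef1 : 2^n * Mx / ρ ≤ 2^n * K / ρ := by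
    gcongr
  have hcoef2 : 2^n * Mxh / ρ ≤ 2^n * K / ρ := by
    gcongr
  rw [abs_sub_le_iff]
  constructor
  · have h1 : (3*C + 3*2^(n+1)*C + 2^n * Mx / ρ) * s
        ≤ (3*C + 3*2^(n+1)*C + 2^n * K / ρ) * s := by
      apply mul_le_mul_of_nonneg_right _ hs
      linarith
    linarith
  · have h1 : (3*C + 3*2^(n+1)*C + 2^n * Mxh / ρ) * s
        ≤ (3*C + 3*2^(n+1)*C + 2^n * K / ρ) * s := by
      apply mul_le_mul_of_nonneg_right _ hs
      linarith
    linarith
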